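/- Let g', b be natural numbers, let A be a commutative group, and let h : Fin b → A. If there exists a group homomorphism ψ : Ξ_{g',b} →* A with ψ(γ_k) = h k for all k, then ∏_k h k = 1. Conversely, if ∏_k h k = 1, then the map sending ψ to the pair of tuples ((ψ(A_j))_{j}, (ψ(B_j))_{j}) is a bijection from { ψ : Ξ_{g',b} →* A // ∀ k, ψ(γ_k) = h k } onto (Fin g' → A) × (Fin g' → A). -/

import Mathlib

open scoped commutatorElement
/-- The single relator `(∏_j [A_j, B_j]) · γ_1 ⋯ γ_b` in the free group on
`(Fin g' ⊕ Fin g') ⊕ Fin b`, where `A_j`, `B_j`, `γ_k` are the free generators indexed by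
the left, middle and right summands, products taken in the order of the indices. -/
def surfaceRelator (g' b : ℕ) : FreeGroup ((Fin g' ⊕ Fin g') ⊕ Fin b) :=
  (List.ofFn fun j : Fin g' =>
      ⁅(FreeGroup.of (Sum.inl (Sum.inl j)) : FreeGroup ((Fin g' ⊕ Fin g') ⊕ Fin b)),
        FreeGroup.of (Sum.inl (Sum.inr j))⁆).prod *
  (List.ofFn fun k : Fin b =>
      (FreeGroup.of (Sum.inr k) : FreeGroup ((Fin g' ⊕ Fin g') ⊕ Fin b))).prod

/-- The fundamental group `Ξ_{g',b}` of a genus `g'` surface with `b` punctures, presented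
with generators `A_j, B_j (j < g')`, `γ_k (k < b)` and the single surface relator. -/
abbrev SurfaceGroup (g' b : ℕ) : Type :=
  PresentedGroup ({surfaceRelator g' b} : Set (FreeGroup ((Fin g' ⊕ Fin g') ⊕ Fin b)))

/-- The image `A_j` of the `j`-th handle generator in `Ξ_{g',b}`. -/
def SurfaceGroup.A {g' b : ℕ} (j : Fin g') : SurfaceGroup g' b :=
  PresentedGroup.of (Sum.inl (Sum.inl j))

/-- The image `B_j` of the `j`-th handle generator in `Ξ_{g',b}`. -/
def SurfaceGroup.B {g' b : ℕ} (j : Fin g') : SurfaceGroup g' b :=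
  PresentedGroup.of (Sum.inl (Sum.inr j))

/-- The image `γ_k` of the `k`-th puncture generator in `Ξ_{g',b}`. -/
def SurfaceGroup.gamma {g' b : ℕ} (k : Fin b) : SurfaceGroup g' b :=
  PresentedGroup.of (Sum.inr k)

/-- Homomorphisms from the surface group `Ξ_{g',b}` to an abelian group `A` with prescribed
values `h_k` at the puncture generators exist only if `∏ h_k = 1`, and if `∏ h_k = 1` they
correspond bijectively to the free choices of images of the handle generators `A_j, B_j`. -/

lemma hom_surfaceRelator {g' b : ℕ} {A : Type*} [CommGroup A]
    (φ : FreeGroup ((Fin g' ⊕ Fin g') ⊕ Fin b) →* A) :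
    φ (surfaceRelator g' b) = ∏ k, φ (FreeGroup.of (Sum.inr k)) := by
  unfold surfaceRelator
  rw [map_mul, map_list_prod, map_list_prod, List.map_ofFn, List.map_ofFn]
  have h1 : (List.ofFn (φ ∘ fun j : Fin g' =>
      ⁅(FreeGroup.of (Sum.inl (Sum.inl j)) : FreeGroup ((Fin g' ⊕ Fin g') ⊕ Fin b)),
        FreeGroup.of (Sum.inl (Sum.inr j))⁆)).prod = 1 := by
    rw [List.prod_eq_one]
    intro x hx
    simp only [List.mem_ofFn, Function.comp_apply] at hx
    obtain ⟨j, rfl⟩ := hx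
    rw [map_commutatorElement]
    exact commutatorElement_eq_one_iff_mul_comm.mpr (mul_comm _ _)
  rw [h1, one_mul, List.prod_ofFn]
  rfl

theorem surfaceGroup_hom_abelian (g' b : ℕ) (A : Type*) [CommGroup A] (h : Fin b → A) :
    ((∃ ψ : SurfaceGroup g' b →* A, ∀ k : Fin b, ψ (SurfaceGroup.gamma k) = h k) →
      ∏ k, h k = 1) ∧
    (∏ k, h k = 1 →
      Function.Bijective
        (fun ψ : { ψ : SurfaceGroup g' b →* A // ∀ k : Fin b, ψ (SurfaceGroup.gamma k) = h k } =>
          ((fun j : Fin g' => ψ.1 (SurfaceGroup.A j), fun j : Fin g' => ψ.1 (SurfaceGroup.B j)) :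
            (Fin g' → A) × (Fin g' → A)))) := by
  have key : ∀ ψ : SurfaceGroup g' b →* A, ∏ k, ψ (SurfaceGroup.gamma k) = 1 := by
    intro ψ
    have hrel : PresentedGroup.mk {surfaceRelator g' b} (surfaceRelator g' b) = 1 := by
      have : surfaceRelator g' b ∈ Subgroup.normalClosure
          ({surfaceRelator g' b} : Set (FreeGroup ((Fin g' ⊕ Fin g') ⊕ Fin b))) :=
        Subgroup.subset_normalClosure rfl
      exact (QuotientGroup.eq_one_iff _).mpr this
    have := hom_surfaceRelator (ψ.comp (PresentedGroup.mk {surfaceRelator g' b}))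
    simp only [MonoidHom.comp_apply, hrel, map_one] at this
    exact this.symm
  constructor
  · rintro ⟨ψ, hψ⟩
    rw [← key ψ]
    exact Finset.prod_congr rfl fun k _ => (hψ k).symm
  · intro hprod
    constructor
    · rintro ⟨ψ₁, hψ₁⟩ ⟨ψ₂, hψ₂⟩ heq
      simp only [Prod.mk.injEq] at heq
      ext1
      apply PresentedGroup.ext
      rintro ((j | j) | k)
      · exact congrFun heq.1 j
      · exact congrFun heq.2 j
      · exact (hψ₁ k).trans (hψ₂ k).symm
    · rintro ⟨a, c⟩
      set f : (Fin g' ⊕ Fin g') ⊕ Fin b → A := Sum.elim (Sum.elim a c) h with hf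
      have hrels : ∀ r ∈ ({surfaceRelator g' b} :
          Set (FreeGroup ((Fin g' ⊕ Fin g') ⊕ Fin b))), FreeGroup.lift f r = 1 := by
        rintro r rfl
        rw [hom_surfaceRelator]
        simpa [hf] using hprod
      refine ⟨⟨PresentedGroup.toGroup hrels, fun k => PresentedGroup.toGroup.of hrels⟩, ?_⟩
      refine Prod.ext ?_ ?_ <;> funext j <;>
        exact PresentedGroup.toGroup.of hrels
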